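/- Let w > 0 and define v̂(w) = ω·w/(ω·w + β₂·(μ + w)). If (1 − 1/(γ·v̂(w)))·ĥ(0) > β₂, then there exists a unique u > 0 satisfying (1 − 1/(γ·v̂(w)))·ĥ(u) = β₂; consequently (u, v̂(w)) is the unique solution with u > 0 of the system (1 − 1/(γv))·ĥ(u) = β₂, ω(1 − v)·w/(μ + w) = (v − 1/γ)·ĥ(u). -/

import Mathlib

/-- The nondimensional light-dependent growth function
`ĥ(u) = (1/(u + k₁)) · log((1 + I)/(1 + I·exp(−(u + k₁))))`. -/
noncomputable def hhat (k₁ I u : ℝ) : ℝ :=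
  (1 / (u + k₁)) * Real.log ((1 + I) / (1 + I * Real.exp (-(u + k₁))))

namespace Stmt17Aux

noncomputable def L (I x : ℝ) : ℝ := Real.log (1 + I) - Real.log (1 + I * Real.exp (-x))
noncomputable def f (I x : ℝ) : ℝ := I * Real.exp (-x) / (1 + I * Real.exp (-x))
noncomputable def g (I x : ℝ) : ℝ := (1 / x) * Real.log ((1 + I) / (1 + I * Real.exp (-x)))
noncomputable def φ (I x : ℝ) : ℝ := L I x - x * f I x

lemma den_pos {I : ℝ} (hI : 0 < I) (x : ℝ) : 0 < 1 + I * Real.exp (-x) := by positivity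

lemma g_eq {I : ℝ} (hI : 0 < I) (x : ℝ) : g I x = L I x / x := by
  unfold g L
  rw [Real.log_div (by positivity) (den_pos hI x).ne']
  ring

lemma hasDerivAt_inner {I : ℝ} (x : ℝ) :
    HasDerivAt (fun x => 1 + I * Real.exp (-x)) (-(I * Real.exp (-x))) x := by
  have h1 : HasDerivAt (fun x : ℝ => Real.exp (-x)) (Real.exp (-x) * (-1)) x :=
    (Real.hasDerivAt_exp (-x)).comp x (hasDerivAt_neg x)
  have := (h1.const_mul I).const_add 1
  exact this.congr_deriv (by ring)

lemma hasDerivAt_L {I : ℝ} (hI : 0 < I) (x : ℝ) : HasDerivAt (L I) (f I x) x := by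
  have h2 := ((hasDerivAt_inner (I := I) x).log (den_pos hI x).ne').const_sub (Real.log (1 + I))
  refine h2.congr_deriv ?_
  unfold f; field_simp

lemma hasDerivAt_f {I : ℝ} (hI : 0 < I) (x : ℝ) :
    HasDerivAt (f I) (-(I * Real.exp (-x)) / (1 + I * Real.exp (-x)) ^ 2) x := by
  have hn : HasDerivAt (fun x => I * Real.exp (-x)) (-(I * Real.exp (-x))) x := by
    have h1 : HasDerivAt (fun x : ℝ => Real.exp (-x)) (Real.exp (-x) * (-1)) x :=
      (Real.hasDerivAt_exp (-x)).comp x (hasDerivAt_neg x)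
    have := h1.const_mul I
    exact this.congr_deriv (by ring)
  have := hn.div (hasDerivAt_inner (I := I) x) (den_pos hI x).ne'
  refine this.congr_deriv ?_
  field_simp; ring

lemma hasDerivAt_phi {I : ℝ} (hI : 0 < I) (x : ℝ) :
    HasDerivAt (φ I) (x * (I * Real.exp (-x)) / (1 + I * Real.exp (-x)) ^ 2) x := by
  have := (hasDerivAt_L hI x).sub ((hasDerivAt_id x).mul (hasDerivAt_f hI x))
  refine this.congr_deriv ?_
  have hd := (den_pos hI x).ne'
  unfold f
  simp only [id]
  field_simp
  ring

lemma phi_pos {I : ℝ} (hI : 0 < I) {x : ℝ} (hx : 0 < x) : 0 < φ I x := by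
  have h0 : φ I 0 = 0 := by
    unfold φ L f; simp
  have hmono : StrictMonoOn (φ I) (Set.Ici 0) := by
    apply strictMonoOn_of_deriv_pos (convex_Ici 0)
    · exact fun y _ => ((hasDerivAt_phi hI y).continuousAt).continuousWithinAt
    · intro y hy
      rw [interior_Ici] at hy
      rw [(hasDerivAt_phi hI y).deriv]
      have hy0 : (0:ℝ) < y := hy
      have hd := den_pos hI y
      have he : (0:ℝ) < I * Real.exp (-y) := by positivity
      exact div_pos (mul_pos hy0 he) (by positivity)
  have := hmono (Set.self_mem_Ici) (Set.mem_Ici.mpr hx.le) hx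
  rwa [h0] at this

lemma hasDerivAt_g {I : ℝ} (hI : 0 < I) {x : ℝ} (hx : 0 < x) :
    HasDerivAt (g I) (-(φ I x) / x ^ 2) x := by
  have hx0 : (x:ℝ) ≠ 0 := (ne_of_gt hx)
  have h := (hasDerivAt_L hI x).div (hasDerivAt_id x) hx0
  have hev : g I =ᶠ[nhds x] (fun y => L I y / id y) := by
    filter_upwards [Ioi_mem_nhds hx] with y hy
    simpa using g_eq hI y
  have h2 : HasDerivAt (g I) ((f I x * id x - L I x * 1) / id x ^ 2) x :=
    h.congr_of_eventuallyEq hev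
  refine h2.congr_deriv ?_
  unfold φ f
  simp only [id]
  field_simp
  ring

lemma g_strictAntiOn {I : ℝ} (hI : 0 < I) : StrictAntiOn (g I) (Set.Ioi 0) := by
  apply strictAntiOn_of_deriv_neg (convex_Ioi 0)
  · exact fun y hy => ((hasDerivAt_g hI hy).continuousAt).continuousWithinAt
  · intro y hy
    rw [interior_Ioi] at hy
    rw [(hasDerivAt_g hI hy).deriv]
    have hφ := phi_pos hI (Set.mem_Ioi.mp hy)
    have hy0 : (0:ℝ) < y := hy
    exact div_neg_of_neg_of_pos (neg_neg_of_pos hφ) (by positivity)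

lemma L_pos {I : ℝ} (hI : 0 < I) {x : ℝ} (hx : 0 < x) : 0 < L I x := by
  unfold L
  have h1 : 1 + I * Real.exp (-x) < 1 + I := by
    have := Real.exp_lt_one_iff.mpr (neg_neg_of_pos hx)
    nlinarith
  have := Real.log_lt_log (den_pos hI x) h1
  linarith

lemma g_pos {I : ℝ} (hI : 0 < I) {x : ℝ} (hx : 0 < x) : 0 < g I x := by
  rw [g_eq hI]
  exact div_pos (L_pos hI hx) hx

lemma g_le {I : ℝ} (hI : 0 < I) {x : ℝ} (hx : 0 < x) : g I x ≤ Real.log (1 + I) / x := by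
  rw [g_eq hI]
  have hL : L I x ≤ Real.log (1 + I) := by
    unfold L
    have h1 : (0:ℝ) ≤ Real.log (1 + I * Real.exp (-x)) := by
      apply Real.log_nonneg
      have : (0:ℝ) ≤ I * Real.exp (-x) := by positivity
      linarith
    linarith
  gcongr


end Stmt17Aux
theorem stmt_17 (k₁ I ω β₂ μ γ : ℝ)
    (hk₁ : 0 < k₁) (hI : 0 < I) (hω : 0 < ω) (hβ₂ : 0 < β₂) (hμ : 0 < μ) (hγ : 1 < γ)
    (w : ℝ) (hw : 0 < w)
    (vhat : ℝ) (hvhat : vhat = ω * w / (ω * w + β₂ * (μ + w)))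
    (hcond : (1 - 1 / (γ * vhat)) * hhat k₁ I 0 > β₂) :
    (∃! u : ℝ, 0 < u ∧ (1 - 1 / (γ * vhat)) * hhat k₁ I u = β₂) ∧
    (∃! uv : ℝ × ℝ, 0 < uv.1 ∧
      (1 - 1 / (γ * uv.2)) * hhat k₁ I uv.1 = β₂ ∧
      ω * (1 - uv.2) * w / (μ + w) = (uv.2 - 1 / γ) * hhat k₁ I uv.1) ∧
    (∀ uv : ℝ × ℝ, 0 < uv.1 →
      (1 - 1 / (γ * uv.2)) * hhat k₁ I uv.1 = β₂ →
      ω * (1 - uv.2) * w / (μ + w) = (uv.2 - 1 / γ) * hhat k₁ I uv.1 →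
      uv.2 = vhat) := by
  have hvd : (0:ℝ) < ω * w + β₂ * (μ + w) := by positivity
  have hμw : (0:ℝ) < μ + w := by linarith
  have hγ0 : (0:ℝ) < γ := by linarith
  have hvpos : 0 < vhat := by rw [hvhat]; positivity
  have hvlt : vhat < 1 := by
    rw [hvhat, div_lt_one hvd]; nlinarith
  set c := 1 - 1 / (γ * vhat) with hc_def
  have hhg : ∀ u : ℝ, hhat k₁ I u = Stmt17Aux.g I (u + k₁) := fun u => rfl
  have hh0 : hhat k₁ I 0 = Stmt17Aux.g I k₁ := by rw [hhg]; norm_num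
  have hgk : 0 < Stmt17Aux.g I k₁ := Stmt17Aux.g_pos hI hk₁
  have hcond' : c * Stmt17Aux.g I k₁ > β₂ := by rwa [hh0] at hcond
  have hc : 0 < c := by nlinarith
  have hlog : 0 < Real.log (1 + I) := Real.log_pos (by linarith)
  set U : ℝ := c * Real.log (1 + I) / β₂ + 1 with hU_def
  have hU : 0 < U := by positivity
  have hFU : c * Stmt17Aux.g I (U + k₁) < β₂ := by
    have h1 : Stmt17Aux.g I (U + k₁) ≤ Real.log (1 + I) / (U + k₁) :=
      Stmt17Aux.g_le hI (by linarith)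
    have hUeq : β₂ * U = c * Real.log (1 + I) + β₂ := by
      rw [hU_def]; field_simp
    have h2 : c * (Real.log (1 + I) / (U + k₁)) < β₂ := by
      rw [mul_div_assoc', div_lt_iff₀ (by linarith : (0:ℝ) < U + k₁)]
      nlinarith [mul_pos hβ₂ hk₁]
    calc c * Stmt17Aux.g I (U + k₁) ≤ c * (Real.log (1 + I) / (U + k₁)) := by gcongr
      _ < β₂ := h2
  set F : ℝ → ℝ := fun u => c * Stmt17Aux.g I (u + k₁) with hF_def
  have hcont : ContinuousOn F (Set.Icc 0 U) := by
    intro u hu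
    have h1 : (0:ℝ) < u + k₁ := by have := hu.1; linarith
    have h2 : ContinuousAt (Stmt17Aux.g I) (u + k₁) := (Stmt17Aux.hasDerivAt_g hI h1).continuousAt
    have h3 : ContinuousAt (fun y : ℝ => y + k₁) u := by fun_prop
    have h4 : ContinuousAt (fun y : ℝ => Stmt17Aux.g I (y + k₁)) u :=
      ContinuousAt.comp (f := fun y : ℝ => y + k₁) h2 h3
    exact (continuousAt_const.mul h4).continuousWithinAt
  have hmem : β₂ ∈ Set.Ioo (F U) (F 0) := by
    refine ⟨hFU, ?_⟩
    simpa [hF_def] using hcond'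
  obtain ⟨u₀, hu₀mem, hFu₀⟩ := intermediate_value_Ioo' hU.le hcont hmem
  have hu₀pos : 0 < u₀ := hu₀mem.1
  have heq₀ : c * hhat k₁ I u₀ = β₂ := by rw [hhg]; exact hFu₀
  have huniq : ∀ u : ℝ, 0 < u → c * hhat k₁ I u = β₂ → u = u₀ := by
    intro u hu he
    have h1 : Stmt17Aux.g I (u + k₁) = Stmt17Aux.g I (u₀ + k₁) := by
      apply mul_left_cancel₀ hc.ne'
      rw [← hhg, ← hhg, he, heq₀]
    have := (Stmt17Aux.g_strictAntiOn hI).injOn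
      (Set.mem_Ioi.mpr (by linarith : (0:ℝ) < u + k₁))
      (Set.mem_Ioi.mpr (by linarith : (0:ℝ) < u₀ + k₁)) h1
    linarith
  have P1 : ∃! u : ℝ, 0 < u ∧ c * hhat k₁ I u = β₂ :=
    ⟨u₀, ⟨hu₀pos, heq₀⟩, fun y hy => huniq y hy.1 hy.2⟩
  -- key: any solution of the pair system has v = vhat
  have key : ∀ uv : ℝ × ℝ, 0 < uv.1 →
      (1 - 1 / (γ * uv.2)) * hhat k₁ I uv.1 = β₂ →
      ω * (1 - uv.2) * w / (μ + w) = (uv.2 - 1 / γ) * hhat k₁ I uv.1 →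
      uv.2 = vhat := by
    rintro ⟨u, v⟩ hu he1 he2
    simp only at he1 he2 ⊢
    have hv0 : v ≠ 0 := by
      rintro rfl
      rw [mul_zero, div_zero, sub_zero, one_mul] at he1
      have hL : 0 < ω * (1 - (0:ℝ)) * w / (μ + w) := by norm_num; positivity
      have hR : ((0:ℝ) - 1 / γ) * hhat k₁ I u < 0 := by
        rw [he1]; rw [zero_sub]
        have : 0 < 1 / γ := by positivity
        nlinarith
      linarith [he2 ▸ hL]
    have he1' : (v - 1 / γ) * hhat k₁ I u = v * β₂ := by
      calc (v - 1 / γ) * hhat k₁ I u = v * ((1 - 1 / (γ * v)) * hhat k₁ I u) := by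
            field_simp
        _ = v * β₂ := by rw [he1]
    rw [he1'] at he2
    have hrel : ω * (1 - v) * w = v * β₂ * (μ + w) := by
      field_simp at he2; linarith
    rw [hvhat, eq_div_iff hvd.ne']
    linear_combination -hrel
  refine ⟨P1, ⟨(u₀, vhat), ⟨hu₀pos, heq₀, ?_⟩, ?_⟩, key⟩
  · -- second equation holds at (u₀, vhat)
    have hrhs : (vhat - 1 / γ) * hhat k₁ I u₀ = vhat * β₂ := by
      calc (vhat - 1 / γ) * hhat k₁ I u₀ = vhat * (c * hhat k₁ I u₀) := by
            rw [hc_def]; field_simp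
        _ = vhat * β₂ := by rw [heq₀]
    rw [hrhs, hvhat]
    field_simp
    ring
  · rintro ⟨u, v⟩ ⟨hu, he1, he2⟩
    have hv : v = vhat := key (u, v) hu he1 he2
    subst hv
    have hueq : u = u₀ := huniq u hu he1
    exact Prod.ext hueq rfl
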